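/- Fix q ∈ (2,4), α > 0 and μ > 0, and let u ∈ X_μ satisfy Ẽ_{q,α}(u) = 𝓔̃_{q,α}(μ) < 0. Then there exists λ ∈ ℝ such that: u is twice continuously differentiable on (0,1) and on (1,∞) and (g(x)u'(x))' = λ g(x) u(x) for every x ∈ (0,1) ∪ (1,∞); moreover the right derivative u'(0⁺) exists and 4 u'(0⁺) = −α |u(0)|^{q−2} u(0). -/

import Mathlib

open MeasureTheory Set

/-- The weight `g(x) = 4` for `x ≤ 1` and `g(x) = 4(2x−1)` for `x > 1`. -/
noncomputable def g (x : ℝ) : ℝ := if x ≤ 1 then 4 else 4 * (2 * x - 1)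

/-- `u` belongs to the weighted Sobolev space `H¹(ℝ⁺, g dx)` with derivative
`u'`: it is locally absolutely continuous on `[0,∞)` (primitive of `u'`) and
both `u² g` and `u'² g` are integrable on `(0,∞)`. -/
def InH1g (u u' : ℝ → ℝ) : Prop :=
  IntegrableOn (fun x => (u x) ^ 2 * g x) (Ioi 0) ∧
    IntegrableOn (fun x => (u' x) ^ 2 * g x) (Ioi 0) ∧
    ∀ a b : ℝ, 0 ≤ a → 0 ≤ b → u b - u a = ∫ x in a..b, u' x

/-- The weighted mass `∫₀^∞ u² g dx`. -/
noncomputable def massg (u : ℝ → ℝ) : ℝ := ∫ x in Ioi (0 : ℝ), (u x) ^ 2 * g x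

/-- The reduced energy `Ẽ_{q,α}(u) = (1/2)∫₀^∞ u'² g dx − (α/q)|u(0)|^q`. -/
noncomputable def energyg (q α : ℝ) (u u' : ℝ → ℝ) : ℝ :=
  (1 / 2) * (∫ x in Ioi (0 : ℝ), (u' x) ^ 2 * g x) - (α / q) * |u 0| ^ q

/-- The set of reduced energies over `X_μ = {u : 0 < ∫ u² g ≤ μ}`;
its infimum is `𝓔̃_{q,α}(μ)`. -/
def levelSetg (q α μ : ℝ) : Set ℝ :=
  {E | ∃ u u' : ℝ → ℝ, InH1g u u' ∧ 0 < massg u ∧ massg u ≤ μ ∧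
    E = energyg q α u u'}

lemma g_cont : Continuous g := by
  unfold g
  apply Continuous.if_le (continuous_const) (by continuity) continuous_id continuous_const
  intro x hx; simp only [id] at hx; subst hx; norm_num

lemma g_ge (x : ℝ) : (4:ℝ) ≤ g x := by
  unfold g; rcases le_or_gt x 1 with h|h
  · simp [h]
  · rw [if_neg (not_le.mpr h)]; nlinarith

lemma g_pos (x : ℝ) : (0:ℝ) < g x := lt_of_lt_of_le (by norm_num) (g_ge x)

lemma g_ne (x : ℝ) : g x ≠ 0 := (g_pos x).ne'

lemma g_zero : g 0 = 4 := by unfold g; norm_num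

/-- FTC for continuous integrands. -/
lemma hasDerivAt_prim {f : ℝ → ℝ} (hf : Continuous f) (x : ℝ) :
    HasDerivAt (fun y => ∫ t in (0:ℝ)..y, f t) (f x) x :=
  (hf.integral_hasStrictDerivAt 0 x).hasDerivAt


-- scratch area: we develop the pieces as standalone lemmas with explicit hypotheses

lemma measure_Ioc_ne_zero_aesm (b₀ : ℝ)
    (h : ¬ AEStronglyMeasurable (fun x : ℝ => x) (volume.restrict (Ioc 0 b₀))) : 0 < b₀ := by
  by_contra hb
  push_neg at hb
  apply h
  have : volume.restrict (Ioc (0:ℝ) b₀) = 0 := by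
    rw [Measure.restrict_eq_zero]
    simp [Ioc_eq_empty (by exact fun hlt => absurd hlt (not_lt.mpr hb))]
  rw [this]
  exact aestronglyMeasurable_zero_measure _


lemma iUnion_Ioc_nat : (⋃ n : ℕ, Ioc (0:ℝ) n) = Ioi 0 := by
  ext x
  simp only [mem_iUnion, mem_Ioc, mem_Ioi]
  constructor
  · rintro ⟨n, h1, _⟩; exact h1
  · intro hx
    obtain ⟨n, hn⟩ := exists_nat_ge x
    exact ⟨n, hx, hn⟩


lemma u'_aesm_Ioc (u u' : ℝ → ℝ) (hu : InH1g u u') (hu0 : u 0 ≠ 0) (b : ℝ) :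
    AEStronglyMeasurable u' (volume.restrict (Ioc 0 b)) := by
  by_contra hb₀
  -- b is positive
  have hbpos : 0 < b := by
    by_contra hble
    push_neg at hble
    apply hb₀
    have : volume.restrict (Ioc (0:ℝ) b) = 0 := by
      rw [Measure.restrict_eq_zero]
      simp [Ioc_eq_empty (not_lt.mpr hble)]
    rw [this]
    exact aestronglyMeasurable_zero_measure _
  -- u is constant beyond b
  have hconst : ∀ c : ℝ, b ≤ c → u c = u 0 := by
    intro c hc
    have h1 : ¬ AEStronglyMeasurable u' (volume.restrict (Ioc 0 c)) := fun h =>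
      hb₀ (h.mono_measure (Measure.restrict_mono (Ioc_subset_Ioc_right hc) le_rfl))
    have h2 : ¬ IntegrableOn u' (Ioc 0 c) := fun h => h1 h.aestronglyMeasurable
    have h3 := hu.2.2 0 c le_rfl (by linarith)
    rw [intervalIntegral.integral_of_le (by linarith : (0:ℝ) ≤ c)] at h3
    rw [integral_undef h2] at h3
    linarith
  -- contradiction with integrability of u² g
  have hIoi : IntegrableOn (fun x => (u x) ^ 2 * g x) (Ioi b) :=
    (hu.1.mono_set (Ioi_subset_Ioi (le_of_lt hbpos)))
  have hIoi2 : IntegrableOn (fun _ : ℝ => 4 * (u 0) ^ 2) (Ioi b) := by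
    apply Integrable.mono hIoi
    · exact aestronglyMeasurable_const
    · filter_upwards [ae_restrict_mem measurableSet_Ioi] with x hx
      have hux : u x = u 0 := hconst x (le_of_lt hx)
      have hg := g_ge x
      rw [Real.norm_eq_abs, Real.norm_eq_abs, hux, abs_of_nonneg (by positivity),
        abs_of_nonneg (by positivity)]
      nlinarith [sq_nonneg (u 0)]
  rw [integrableOn_const_iff] at hIoi2
  rcases hIoi2 with h | h
  · exact hu0 (by simpa using h)
  · rw [Real.volume_Ioi] at h
    exact absurd h (by simp)

lemma u'_aesm (u u' : ℝ → ℝ) (hu : InH1g u u') (hu0 : u 0 ≠ 0) :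
    AEStronglyMeasurable u' (volume.restrict (Ioi 0)) := by
  rw [← iUnion_Ioc_nat]
  exact aestronglyMeasurable_iUnion_iff.mpr fun n => u'_aesm_Ioc u u' hu hu0 n


lemma u'_loc (u u' : ℝ → ℝ) (hu : InH1g u u') (hu0 : u 0 ≠ 0) (b : ℝ) :
    IntegrableOn u' (Ioc 0 b) := by
  have h1 : IntegrableOn (fun x => (u' x) ^ 2 * g x) (Ioc 0 b) :=
    hu.2.1.mono_set Ioc_subset_Ioi_self
  have h2 : IntegrableOn (fun _ : ℝ => (1:ℝ)) (Ioc 0 b) :=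
    (integrableOn_const_iff).mpr (Or.inr measure_Ioc_lt_top)
  apply Integrable.mono' (h1.add h2) (u'_aesm_Ioc u u' hu hu0 b)
  filter_upwards with x
  have hg := g_ge x
  rw [Real.norm_eq_abs]
  simp only [Pi.add_apply]
  nlinarith [sq_nonneg (|u' x| - 1), sq_abs (u' x), abs_nonneg (u' x),
    mul_nonneg (by linarith : (0:ℝ) ≤ g x - 1) (sq_nonneg (u' x))]

lemma u'_ii (u u' : ℝ → ℝ) (hu : InH1g u u') (hu0 : u 0 ≠ 0) (a b : ℝ) (ha : 0 ≤ a) (hb : 0 ≤ b) :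
    IntervalIntegrable u' volume a b := by
  rcases le_total a b with h | h
  · exact (intervalIntegrable_iff_integrableOn_Ioc_of_le h).mpr
      ((u'_loc u u' hu hu0 b).mono_set (Ioc_subset_Ioc_left ha))
  · exact ((intervalIntegrable_iff_integrableOn_Ioc_of_le h).mpr
      ((u'_loc u u' hu hu0 a).mono_set (Ioc_subset_Ioc_left hb))).symm

lemma u_cont (u u' : ℝ → ℝ) (hu : InH1g u u') (hu0 : u 0 ≠ 0) :
    ContinuousOn u (Ici 0) := by
  intro x hx
  have hx0 : (0:ℝ) ≤ x := hx
  have hprim : ContinuousOn (fun y => ∫ t in Ioc 0 y, u' t) (Icc 0 (x+1)) :=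
    intervalIntegral.continuousOn_primitive
      ((integrableOn_Icc_iff_integrableOn_Ioc).mpr (u'_loc u u' hu hu0 (x+1)))
  have h1 : ContinuousWithinAt (fun y => u 0 + ∫ t in Ioc 0 y, u' t) (Icc 0 (x+1)) x :=
    (continuousOn_const.add hprim) x ⟨hx0, by linarith⟩
  have hmem : Icc (0:ℝ) (x+1) ∈ nhdsWithin x (Ici 0) := by
    rw [← Ici_inter_Iic]
    exact Filter.inter_mem self_mem_nhdsWithin
      (mem_nhdsWithin_of_mem_nhds (Iic_mem_nhds (by linarith)))
  have h2 : ContinuousWithinAt (fun y => u 0 + ∫ t in Ioc 0 y, u' t) (Ici 0) x :=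
    h1.mono_of_mem_nhdsWithin hmem
  apply h2.congr
  · intro y hy
    have := hu.2.2 0 y le_rfl hy
    rw [intervalIntegral.integral_of_le hy] at this
    linarith
  · have := hu.2.2 0 x le_rfl hx0
    rw [intervalIntegral.integral_of_le hx0] at this
    linarith


noncomputable def Hf (x : ℝ) : ℝ := ∫ t in (0:ℝ)..x, (g t)⁻¹

lemma ginv_cont : Continuous (fun t : ℝ => (g t)⁻¹) := g_cont.inv₀ g_ne

lemma Hf_hasDeriv (x : ℝ) : HasDerivAt Hf (g x)⁻¹ x := hasDerivAt_prim ginv_cont x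

lemma Hf_cont : Continuous Hf := by
  have := intervalIntegral.continuous_primitive (μ := volume) (f := fun t : ℝ => (g t)⁻¹)
    (fun a b => ginv_cont.intervalIntegrable (μ := volume) a b) 0
  exact this

lemma Hf_zero : Hf 0 = 0 := intervalIntegral.integral_same

lemma Hf_sub (x y : ℝ) : Hf y - Hf x = ∫ t in x..y, (g t)⁻¹ := by
  have := intervalIntegral.integral_add_adjacent_intervals
    (ginv_cont.intervalIntegrable (μ := volume) 0 x) (ginv_cont.intervalIntegrable x y)
  unfold Hf; linarith

lemma Hf_mono {x y : ℝ} (h : x ≤ y) : Hf x ≤ Hf y := by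
  have h2 : 0 ≤ ∫ t in x..y, (g t)⁻¹ :=
    intervalIntegral.integral_nonneg h (fun t _ => le_of_lt (inv_pos.mpr (g_pos t)))
  have := Hf_sub x y; linarith

lemma Hf_nonneg {x : ℝ} (h : 0 ≤ x) : 0 ≤ Hf x := by
  have := Hf_mono h; rw [Hf_zero] at this; exact this

noncomputable def psi (b x : ℝ) : ℝ := Hf b - Hf (min x b)

noncomputable def psi' (b : ℝ) : ℝ → ℝ := fun x => -((Ioc 0 b).indicator (fun t => (g t)⁻¹) x)

lemma psi_cont (b : ℝ) : Continuous (psi b) :=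
  continuous_const.sub (Hf_cont.comp (continuous_id.min continuous_const))

lemma psi_zero (b : ℝ) (hb : 0 ≤ b) : psi b 0 = Hf b := by
  unfold psi; rw [min_eq_left hb, Hf_zero, sub_zero]

lemma psi_of_ge (b x : ℝ) (h : b ≤ x) : psi b x = 0 := by
  unfold psi; rw [min_eq_right h, sub_self]

lemma psi_nonneg (b x : ℝ) (hx : 0 ≤ x) (hb : 0 ≤ b) : 0 ≤ psi b x := by
  unfold psi
  have : Hf (min x b) ≤ Hf b := Hf_mono (min_le_right x b)
  linarith

lemma psi_le (b x : ℝ) (hx : 0 ≤ x) (hb : 0 ≤ b) : psi b x ≤ Hf b := by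
  unfold psi
  have : 0 ≤ Hf (min x b) := Hf_nonneg (le_min hx hb)
  linarith

lemma ind_int (b x y : ℝ) (hx : 0 ≤ x) (hxy : x ≤ y) :
    ∫ t in x..y, (Ioc 0 b).indicator (fun t => (g t)⁻¹) t
      = Hf (min y b) - Hf (min x b) := by
  rw [intervalIntegral.integral_of_le hxy, setIntegral_indicator measurableSet_Ioc,
    Ioc_inter_Ioc, max_eq_left hx]
  rcases le_total x (min y b) with h | h
  · rw [← intervalIntegral.integral_of_le h, ← Hf_sub]
    have hxb : x ≤ b := le_trans h (min_le_right y b)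
    rw [min_eq_left hxb]
  · have h1 : min y b = min x b := le_antisymm
      (le_min (le_trans h (by exact le_of_eq rfl)) (min_le_right y b))
      (min_le_min hxy le_rfl)
    rw [Ioc_eq_empty (not_lt.mpr h), h1, sub_self]
    simp


lemma psi_FTC (b x y : ℝ) (hx : 0 ≤ x) (hy : 0 ≤ y) :
    psi b y - psi b x = ∫ t in x..y, psi' b t := by
  have key : ∀ x y : ℝ, 0 ≤ x → x ≤ y →
      psi b y - psi b x = ∫ t in x..y, psi' b t := by
    intro x y hx hxy
    unfold psi psi'
    rw [intervalIntegral.integral_neg, ind_int b x y hx hxy]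
    ring
  rcases le_total x y with h | h
  · exact key x y hx h
  · have := key y x hy h
    rw [intervalIntegral.integral_symm] at this
    linarith

lemma psi'_mul_g (b x : ℝ) :
    psi' b x * g x = -((Ioc 0 b).indicator (fun _ => (1:ℝ)) x) := by
  unfold psi'
  by_cases hx : x ∈ Ioc 0 b
  · rw [indicator_of_mem hx, indicator_of_mem hx]
    field_simp [g_ne x]
  · rw [indicator_of_notMem hx, indicator_of_notMem hx]
    simp

lemma psi'_sq_g (b x : ℝ) :
    psi' b x ^ 2 * g x = (Ioc 0 b).indicator (fun t => (g t)⁻¹) x := by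
  unfold psi'
  by_cases hx : x ∈ Ioc 0 b
  · simp only [indicator_of_mem hx]
    rw [neg_sq]
    rw [sq]
    field_simp
  · simp only [indicator_of_notMem hx]
    simp

lemma psi'_ii (b a c : ℝ) : IntervalIntegrable (psi' b) volume a c := by
  apply MeasureTheory.Integrable.intervalIntegrable
  apply Integrable.neg
  rw [integrable_indicator_iff measurableSet_Ioc]
  exact (ginv_cont.integrableOn_Icc).mono_set Ioc_subset_Icc_self

lemma psig_sq_int (b : ℝ) (hb : 0 < b) :
    IntegrableOn (fun x => psi b x ^ 2 * g x) (Ioi 0) := by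
  rw [← Ioc_union_Ioi_eq_Ioi hb.le]
  apply IntegrableOn.union
  · exact (((psi_cont b).pow 2).mul g_cont).integrableOn_Icc.mono_set Ioc_subset_Icc_self
  · apply IntegrableOn.congr_fun (integrableOn_zero) _ measurableSet_Ioi
    intro x hx
    show (0:ℝ) = psi b x ^ 2 * g x
    rw [psi_of_ge b x (le_of_lt hx)]
    ring

lemma psi'g_sq_int (b : ℝ) : IntegrableOn (fun x => psi' b x ^ 2 * g x) (Ioi 0) := by
  apply Integrable.integrableOn
  have : (fun x => psi' b x ^ 2 * g x) = (Ioc 0 b).indicator (fun t => (g t)⁻¹) := by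
    funext x; exact psi'_sq_g b x
  rw [this, integrable_indicator_iff measurableSet_Ioc]
  exact (ginv_cont.integrableOn_Icc).mono_set Ioc_subset_Icc_self

lemma u_aesm (u u' : ℝ → ℝ) (hu : InH1g u u') (hu0 : u 0 ≠ 0) :
    AEStronglyMeasurable u (volume.restrict (Ioi 0)) := by
  have hcont : Continuous (fun x : ℝ => u (max x 0)) := by
    apply (u_cont u u' hu hu0).comp_continuous (continuous_id.max continuous_const)
    intro x; exact le_max_right x 0
  apply hcont.aestronglyMeasurable.congr
  rw [Filter.eventuallyEq_iff_exists_mem]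
  exact ⟨Ioi 0, self_mem_ae_restrict measurableSet_Ioi,
    fun x hx => by simp [max_eq_left (le_of_lt (mem_Ioi.mp hx))]⟩

lemma upsig_int (u u' : ℝ → ℝ) (hu : InH1g u u') (hu0 : u 0 ≠ 0) (b : ℝ) (hb : 0 < b) :
    IntegrableOn (fun x => u x * psi b x * g x) (Ioi 0) := by
  apply Integrable.mono' (((hu.1).add (psig_sq_int b hb)).const_mul (1/2 : ℝ))
  · exact ((u_aesm u u' hu hu0).mul ((psi_cont b).aestronglyMeasurable.restrict)).mul
      (g_cont.aestronglyMeasurable.restrict)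
  · filter_upwards with x
    have hg := (g_pos x).le
    rw [Real.norm_eq_abs, abs_mul, abs_mul, abs_of_nonneg hg]
    simp only [Pi.add_apply]
    nlinarith [sq_nonneg (|u x| - |psi b x|), sq_abs (u x), sq_abs (psi b x),
      mul_nonneg (mul_nonneg (abs_nonneg (u x)) (abs_nonneg (psi b x))) hg,
      sq_nonneg (u x), sq_nonneg (psi b x)]

lemma u'psi'g_eq (u' : ℝ → ℝ) (b : ℝ) :
    (fun x => u' x * psi' b x * g x) = fun x => -((Ioc 0 b).indicator u' x) := by
  funext x
  rw [mul_assoc, psi'_mul_g b x]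
  by_cases hx : x ∈ Ioc 0 b
  · rw [indicator_of_mem hx, indicator_of_mem hx]; ring
  · rw [indicator_of_notMem hx, indicator_of_notMem hx]; ring

lemma u'psi'g_int (u u' : ℝ → ℝ) (hu : InH1g u u') (hu0 : u 0 ≠ 0) (b : ℝ) :
    IntegrableOn (fun x => u' x * psi' b x * g x) (Ioi 0) := by
  apply Integrable.integrableOn
  rw [u'psi'g_eq]
  apply Integrable.neg
  rw [integrable_indicator_iff measurableSet_Ioc]
  exact u'_loc u u' hu hu0 b


lemma abs_rpow_deriv {q : ℝ} (hq : 2 < q) (c : ℝ) (hc : c ≠ 0) :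
    HasDerivAt (fun s : ℝ => |s| ^ q) (q * |c| ^ (q - 2) * c) c := by
  rcases hc.lt_or_gt with h | h
  · have h2 : HasDerivAt (fun s : ℝ => -s) (-1 : ℝ) c := (hasDerivAt_id c).neg
    have h3 := (Real.hasDerivAt_rpow_const (x := -c) (p := q)
      (Or.inl (by linarith : (-c) ≠ 0))).comp c h2
    have h4 : (fun s : ℝ => |s| ^ q) =ᶠ[nhds c] ((fun y : ℝ => y ^ q) ∘ (fun s => -s)) := by
      filter_upwards [Iio_mem_nhds h] with s hs
      simp only [Function.comp_apply]
      rw [abs_of_neg hs]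
    have h5 := (h4.hasDerivAt_iff).mpr h3
    refine h5.congr_deriv ?_
    rw [abs_of_neg h]
    have heq : (-c) ^ (q-1) = (-c) ^ (q-2) * (-c) := by
      have h6 : q - 1 = q - 2 + 1 := by ring
      rw [h6, Real.rpow_add_one (by linarith : (-c) ≠ 0)]
    rw [heq]; ring
  · have h3 := Real.hasDerivAt_rpow_const (x := c) (p := q) (Or.inl hc)
    have h4 : (fun s : ℝ => |s| ^ q) =ᶠ[nhds c] (fun y : ℝ => y ^ q) := by
      filter_upwards [Ioi_mem_nhds h] with s hs
      rw [abs_of_pos hs]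
    have h5 := (h4.hasDerivAt_iff).mpr h3
    refine h5.congr_deriv ?_
    rw [abs_of_pos h]
    have heq : c ^ (q-1) = c ^ (q-2) * c := by
      have h6 : q - 1 = q - 2 + 1 := by ring
      rw [h6, Real.rpow_add_one hc]
    rw [heq]; ring


lemma variational (q α μ : ℝ) (hq : 2 < q) (hα : 0 < α)
    (u u' : ℝ → ℝ) (hu : InH1g u u') (hm0 : 0 < massg u) (hm : massg u ≤ μ)
    (hmin : energyg q α u u' = sInf (levelSetg q α μ))
    (hneg : sInf (levelSetg q α μ) < 0) (hu0 : u 0 ≠ 0) (b : ℝ) (hb : 0 < b) :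
    u 0 - u b =
      ((∫ x in Ioi (0:ℝ), u' x ^ 2 * g x) - α * |u 0| ^ q) / massg u
        * (∫ x in Ioi (0:ℝ), u x * psi b x * g x)
      + (α * |u 0| ^ (q - 2) * u 0) * Hf b := by
  have hq0 : q ≠ 0 := by linarith
  set m := massg u with hm_def
  set K := ∫ x in Ioi (0:ℝ), u' x ^ 2 * g x with hK_def
  set A := ∫ x in Ioi (0:ℝ), u x * psi b x * g x with hA_def
  set B := ∫ x in Ioi (0:ℝ), psi b x ^ 2 * g x with hB_def
  set K1 := ∫ x in Ioi (0:ℝ), u' x * psi' b x * g x with hK1_def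
  set K2 := ∫ x in Ioi (0:ℝ), psi' b x ^ 2 * g x with hK2_def
  have i_up := upsig_int u u' hu hu0 b hb
  have i_p2 := psig_sq_int b hb
  have i_u'p' := u'psi'g_int u u' hu hu0 b
  have i_p'2 := psi'g_sq_int b
  -- expansion of the mass
  have hIm : ∀ t : ℝ, IntegrableOn (fun x => (u x + t * psi b x) ^ 2 * g x) (Ioi 0) := by
    intro t
    have hfun : (fun x => (u x + t * psi b x) ^ 2 * g x)
        = fun x => u x ^ 2 * g x + ((2*t) * (u x * psi b x * g x) + t^2 * (psi b x ^ 2 * g x)) :=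
      funext fun x => by ring
    rw [hfun]
    exact hu.1.add ((i_up.const_mul _).add (i_p2.const_mul _))
  have hMexp : ∀ t : ℝ, ∫ x in Ioi (0:ℝ), (u x + t * psi b x) ^ 2 * g x
      = m + 2*A*t + B*t^2 := by
    intro t
    have hfun : (fun x => (u x + t * psi b x) ^ 2 * g x)
        = fun x => u x ^ 2 * g x + ((2*t) * (u x * psi b x * g x) + t^2 * (psi b x ^ 2 * g x)) :=
      funext fun x => by ring
    have h2 : IntegrableOn
        (fun x => (2*t) * (u x * psi b x * g x) + t^2 * (psi b x ^ 2 * g x)) (Ioi 0) :=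
      (i_up.const_mul _).add (i_p2.const_mul _)
    rw [hfun, integral_add hu.1 h2,
      integral_add (i_up.const_mul _) (i_p2.const_mul _),
      integral_const_mul, integral_const_mul]
    rw [hm_def]
    unfold massg
    ring
  -- expansion of the kinetic energy
  have hIk : ∀ t : ℝ, IntegrableOn (fun x => (u' x + t * psi' b x) ^ 2 * g x) (Ioi 0) := by
    intro t
    have hfun : (fun x => (u' x + t * psi' b x) ^ 2 * g x)
        = fun x => u' x ^ 2 * g x + ((2*t) * (u' x * psi' b x * g x) + t^2 * (psi' b x ^ 2 * g x)) :=
      funext fun x => by ring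
    rw [hfun]
    exact hu.2.1.add ((i_u'p'.const_mul _).add (i_p'2.const_mul _))
  have hKexp : ∀ t : ℝ, ∫ x in Ioi (0:ℝ), (u' x + t * psi' b x) ^ 2 * g x
      = K + 2*K1*t + K2*t^2 := by
    intro t
    have hfun : (fun x => (u' x + t * psi' b x) ^ 2 * g x)
        = fun x => u' x ^ 2 * g x + ((2*t) * (u' x * psi' b x * g x) + t^2 * (psi' b x ^ 2 * g x)) :=
      funext fun x => by ring
    have h2 : IntegrableOn
        (fun x => (2*t) * (u' x * psi' b x * g x) + t^2 * (psi' b x ^ 2 * g x)) (Ioi 0) :=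
      (i_u'p'.const_mul _).add (i_p'2.const_mul _)
    rw [hfun, integral_add hu.2.1 h2,
      integral_add (i_u'p'.const_mul _) (i_p'2.const_mul _),
      integral_const_mul, integral_const_mul]
    ring
  -- the small parameter
  set δ := min 1 (m / (2*|A| + |B| + 1)) with hδ_def
  have hδpos : 0 < δ := lt_min one_pos (div_pos hm0 (by positivity))
  set M := fun t : ℝ => m + 2*A*t + B*t^2 with hM_def
  have hMpos : ∀ t : ℝ, |t| < δ → 0 < M t := by
    intro t ht
    have h1 : |t| < 1 := lt_of_lt_of_le ht (min_le_left _ _)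
    have h2 : |t| < m / (2*|A| + |B| + 1) := lt_of_lt_of_le ht (min_le_right _ _)
    have h3 : |t| * (2*|A| + |B| + 1) < m := by
      rw [← lt_div_iff₀ (by positivity)]
      exact h2
    have h4 : -(|t| * (2*|A|)) ≤ 2*A*t := by
      have h := neg_abs_le (t*A)
      rw [abs_mul] at h
      nlinarith [h]
    have h5 : -(|t| * |B|) ≤ B*t^2 := by
      have ha : -|B| * t^2 ≤ B * t^2 := mul_le_mul_of_nonneg_right (neg_abs_le B) (sq_nonneg t)
      have hb2 : t^2 ≤ |t| := by nlinarith [sq_abs t, abs_nonneg t]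
      nlinarith [abs_nonneg B]
    show 0 < m + 2*A*t + B*t^2
    nlinarith [abs_nonneg t]
  set c := fun t : ℝ => Real.sqrt (m / M t) with hc_def
  have hc2 : ∀ t : ℝ, |t| < δ → c t ^ 2 = m / M t := by
    intro t ht
    exact Real.sq_sqrt (le_of_lt (div_pos hm0 (hMpos t ht)))
  have hcpos : ∀ t : ℝ, |t| < δ → 0 < c t := by
    intro t ht
    exact Real.sqrt_pos.mpr (div_pos hm0 (hMpos t ht))
  -- the perturbed curve and its energy formula
  set hform := fun t : ℝ => (m / M t) * ((1/2)*(K + 2*K1*t + K2*t^2))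
      - (α/q) * ((m / M t) ^ (q/2) * |u 0 + Hf b * t| ^ q) with hform_def
  have hmass_t : ∀ t, |t| < δ → massg (fun x => c t * (u x + t * psi b x)) = m := by
    intro t ht
    have hMt := hMpos t ht
    unfold massg
    have hfun : (fun x => (c t * (u x + t * psi b x)) ^ 2 * g x)
        = fun x => (c t) ^ 2 * ((u x + t * psi b x) ^ 2 * g x) := funext fun x => by ring
    rw [hfun, integral_const_mul, hMexp t, hc2 t ht]
    field_simp
    linarith [show M t = m + 2*A*t + B*t^2 from rfl]
  have hInH1 : ∀ t, |t| < δ →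
      InH1g (fun x => c t * (u x + t * psi b x)) (fun x => c t * (u' x + t * psi' b x)) := by
    intro t ht
    refine ⟨?_, ?_, ?_⟩
    · have hfun : (fun x => (c t * (u x + t * psi b x)) ^ 2 * g x)
          = fun x => (c t) ^ 2 * ((u x + t * psi b x) ^ 2 * g x) := funext fun x => by ring
      rw [hfun]; exact (hIm t).const_mul _
    · have hfun : (fun x => (c t * (u' x + t * psi' b x)) ^ 2 * g x)
          = fun x => (c t) ^ 2 * ((u' x + t * psi' b x) ^ 2 * g x) := funext fun x => by ring
      rw [hfun]; exact (hIk t).const_mul _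
    · intro a a' ha ha'
      have h1 := hu.2.2 a a' ha ha'
      have h2 := psi_FTC b a a' ha ha'
      have h3 : ∫ x in a..a', c t * (u' x + t * psi' b x)
          = c t * ((∫ x in a..a', u' x) + t * ∫ x in a..a', psi' b x) := by
        rw [intervalIntegral.integral_const_mul, intervalIntegral.integral_add
          (u'_ii u u' hu hu0 a a' ha ha') ((psi'_ii b a a').const_mul t),
          intervalIntegral.integral_const_mul]
      show c t * (u a' + t * psi b a') - c t * (u a + t * psi b a) = _
      rw [h3, ← h1, ← h2]
      ring
  have hbdd : BddBelow (levelSetg q α μ) := by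
    by_contra hbd
    rw [Real.sInf_of_not_bddBelow hbd] at hneg
    exact absurd hneg (lt_irrefl 0)
  have hE_formula : ∀ t, |t| < δ →
      energyg q α (fun x => c t * (u x + t * psi b x)) (fun x => c t * (u' x + t * psi' b x))
        = hform t := by
    intro t ht
    unfold energyg
    have hkin : ∫ x in Ioi (0:ℝ), (c t * (u' x + t * psi' b x)) ^ 2 * g x
        = (m / M t) * (K + 2*K1*t + K2*t^2) := by
      have hfun : (fun x => (c t * (u' x + t * psi' b x)) ^ 2 * g x)
          = fun x => (c t) ^ 2 * ((u' x + t * psi' b x) ^ 2 * g x) := funext fun x => by ring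
      rw [hfun, integral_const_mul, hKexp t, hc2 t ht]
    have hbound : |c t * (u 0 + t * psi b 0)| ^ q
        = (m / M t) ^ (q/2) * |u 0 + Hf b * t| ^ q := by
      rw [psi_zero b hb.le, abs_mul, abs_of_pos (hcpos t ht),
        Real.mul_rpow (hcpos t ht).le (abs_nonneg _)]
      have hc_eq : c t ^ q = (m / M t) ^ (q/2) := by
        show (Real.sqrt (m / M t)) ^ q = _
        rw [Real.sqrt_eq_rpow, ← Real.rpow_mul (div_pos hm0 (hMpos t ht)).le,
          show (1:ℝ)/2*q = q/2 by ring]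
      rw [hc_eq]
      have : u 0 + t * Hf b = u 0 + Hf b * t := by ring
      rw [this]
    rw [hkin]
    show (1/2) * ((m / M t) * (K + 2*K1*t + K2*t^2)) - α / q * |c t * (u 0 + t * psi b 0)| ^ q
        = hform t
    rw [hbound, hform_def]
    ring
  have hmemb : ∀ t, |t| < δ → sInf (levelSetg q α μ) ≤ hform t := by
    intro t ht
    rw [← hE_formula t ht]
    apply csInf_le hbdd
    exact ⟨_, _, hInH1 t ht, by rw [hmass_t t ht]; exact hm0,
      by rw [hmass_t t ht]; exact hm, rfl⟩
  have hform0 : hform 0 = sInf (levelSetg q α μ) := by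
    rw [← hE_formula 0 (by simpa using hδpos)]
    have hM0 : M 0 = m := by show m + 2*A*0 + B*0^2 = m; ring
    have hc0 : c 0 = 1 := by
      show Real.sqrt (m / M 0) = 1
      rw [hM0, div_self hm0.ne', Real.sqrt_one]
    have hv : (fun x => c 0 * (u x + 0 * psi b x)) = u := by
      funext x; rw [hc0]; ring
    have hv' : (fun x => c 0 * (u' x + 0 * psi' b x)) = u' := by
      funext x; rw [hc0]; ring
    rw [hv, hv', hmin]
  have hlocmin : IsLocalMin hform 0 := by
    have hev : ∀ᶠ t in nhds (0:ℝ), |t| < δ := by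
      filter_upwards [Metric.ball_mem_nhds (0:ℝ) hδpos] with t ht
      simpa [Real.dist_eq] using ht
    filter_upwards [hev] with t ht
    rw [hform0]
    exact hmemb t ht
  -- derivative of the formula at 0
  have hM0val : M 0 = m := by show m + 2*A*0 + B*0^2 = m; ring
  have hMd : HasDerivAt M (2*A) 0 := by
    have h3 : HasDerivAt (fun t : ℝ => m + 2*A*t + B*t^2)
        (0 + (2*A*1) + B*((2:ℕ)*0^(2-1)) ) 0 :=
      ((hasDerivAt_const 0 m).add ((hasDerivAt_id 0).const_mul (2*A))).add
        ((hasDerivAt_pow 2 0).const_mul B)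
    rw [hM_def]
    convert h3 using 1
    norm_num
  have hf1 : HasDerivAt (fun t => m / M t) (-(2*A)/m) 0 := by
    have h := (hasDerivAt_const (0:ℝ) m).div hMd (by rw [hM0val]; exact hm0.ne')
    refine h.congr_deriv ?_
    rw [hM0val]
    field_simp
    ring
  have hE2 : HasDerivAt (fun t : ℝ => (1/2)*(K + 2*K1*t + K2*t^2)) K1 0 := by
    have h3 : HasDerivAt (fun t : ℝ => K + 2*K1*t + K2*t^2)
        (0 + (2*K1*1) + K2*((2:ℕ)*0^(2-1))) 0 :=
      ((hasDerivAt_const 0 K).add ((hasDerivAt_id 0).const_mul (2*K1))).add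
        ((hasDerivAt_pow 2 0).const_mul K2)
    have h4 := h3.const_mul (1/2 : ℝ)
    refine h4.congr_deriv ?_
    push_cast
    ring
  have hone : m / M 0 = 1 := by rw [hM0val, div_self hm0.ne']
  have hf3 : HasDerivAt (fun t => (m / M t) ^ (q/2)) (-(2*A)/m * (q/2)) 0 := by
    have h := hf1.rpow_const (p := q/2) (Or.inl (by rw [hone]; exact one_ne_zero))
    convert h using 1
    rw [hone, Real.one_rpow]
    ring
  have hF4 : HasDerivAt (fun t => |u 0 + Hf b * t| ^ q)
      ((q * |u 0| ^ (q-2) * u 0) * Hf b) 0 := by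
    have haff : HasDerivAt (fun t : ℝ => u 0 + Hf b * t) (Hf b) 0 := by
      have := (hasDerivAt_const (0:ℝ) (u 0)).add ((hasDerivAt_id 0).const_mul (Hf b))
      refine this.congr_deriv ?_
      ring
    have habs := abs_rpow_deriv hq (u 0) hu0
    have h0 : u 0 + Hf b * 0 = u 0 := by ring
    rw [← h0] at habs
    have h := HasDerivAt.comp (0:ℝ) habs haff
    refine h.congr_deriv ?_
    rw [h0]
  have hDer : HasDerivAt hform
      ((-(2*A)/m) * ((1/2)*(K + 2*K1*0 + K2*0^2)) + (m / M 0) * K1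
        - (α/q) * ((-(2*A)/m * (q/2)) * |u 0 + Hf b * 0| ^ q
            + (m / M 0) ^ (q/2) * ((q * |u 0| ^ (q-2) * u 0) * Hf b))) 0 := by
    rw [hform_def]
    exact (hf1.mul hE2).sub ((hf3.mul hF4).const_mul (α/q))
  have hD := hlocmin.hasDerivAt_eq_zero hDer
  have hK1val : K1 = u 0 - u b := by
    rw [hK1_def, u'psi'g_eq u' b, integral_neg, setIntegral_indicator measurableSet_Ioc,
      inter_eq_self_of_subset_right Ioc_subset_Ioi_self,
      ← intervalIntegral.integral_of_le hb.le, ← hu.2.2 0 b le_rfl hb.le]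
    ring
  rw [hone, Real.one_rpow, show u 0 + Hf b * 0 = u 0 by ring, hK1val] at hD
  field_simp at hD
  have h4qm : (4*q*m) ≠ 0 := by positivity
  have hX : -(A*K) + m*(u 0 - u b) + A*α*|u 0|^q - m*α*(|u 0|^(q-2)*u 0)*Hf b = 0 := by
    apply mul_left_cancel₀ h4qm
    rw [mul_zero]
    linear_combination (4*q*m) * hD
  field_simp
  linarith [hX]


lemma A_eq (u u' : ℝ → ℝ) (hu : InH1g u u') (hu0 : u 0 ≠ 0) (b : ℝ) (hb : 0 < b) :
    ∫ x in Ioi (0:ℝ), u x * psi b x * g x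
      = Hf b * (∫ x in (0:ℝ)..b, u (max x 0) * g x)
        - ∫ x in (0:ℝ)..b, u (max x 0) * g x * Hf x := by
  have hcont_ut : Continuous (fun x : ℝ => u (max x 0)) := by
    apply (u_cont u u' hu hu0).comp_continuous (continuous_id.max continuous_const)
    intro x; exact le_max_right x 0
  have hint1 : IntegrableOn (fun x => u (max x 0) * g x) (Ioc 0 b) :=
    (hcont_ut.mul g_cont).integrableOn_Icc.mono_set Ioc_subset_Icc_self
  have hint2 : IntegrableOn (fun x => u (max x 0) * g x * Hf x) (Ioc 0 b) :=
    ((hcont_ut.mul g_cont).mul Hf_cont).integrableOn_Icc.mono_set Ioc_subset_Icc_self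
  rw [← Ioc_union_Ioi_eq_Ioi hb.le,
    setIntegral_union (Ioc_disjoint_Ioi le_rfl) measurableSet_Ioi
      ((upsig_int u u' hu hu0 b hb).mono_set Ioc_subset_Ioi_self)
      ((upsig_int u u' hu hu0 b hb).mono_set (Ioi_subset_Ioi hb.le))]
  have hzero : ∫ x in Ioi b, u x * psi b x * g x = 0 := by
    rw [setIntegral_congr_fun measurableSet_Ioi
      (fun x (hx : x ∈ Ioi b) => by
          show u x * psi b x * g x = (0:ℝ)
          rw [psi_of_ge b x (le_of_lt hx)]; ring
        : EqOn (fun x => u x * psi b x * g x) (fun _ => (0:ℝ)) (Ioi b))]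
    simp
  rw [hzero, add_zero]
  have hcongr : EqOn (fun x => u x * psi b x * g x)
      (fun x => Hf b * (u (max x 0) * g x) - u (max x 0) * g x * Hf x) (Ioc 0 b) := by
    intro x hx
    have h1 : max x 0 = x := max_eq_left hx.1.le
    have h2 : min x b = x := min_eq_left hx.2
    show u x * psi b x * g x = Hf b * (u (max x 0) * g x) - u (max x 0) * g x * Hf x
    rw [h1]
    unfold psi
    rw [h2]
    ring
  rw [setIntegral_congr_fun measurableSet_Ioc hcongr,
    integral_sub (hint1.const_mul _) hint2, integral_const_mul,
    intervalIntegral.integral_of_le hb.le, intervalIntegral.integral_of_le hb.le]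



/-- Euler–Lagrange equation: a minimizer `u ∈ X_μ` with `Ẽ_{q,α}(u) = 𝓔̃_{q,α}(μ) < 0`
is `C²` on `(0,1)` and on `(1,∞)`, satisfies `(g u')' = λ g u` there for some
`λ ∈ ℝ`, and its right derivative at `0` satisfies `4u'(0⁺) = −α|u(0)|^{q−2}u(0)`. -/
theorem stmt13 (q α μ : ℝ) (hq : 2 < q) (hq' : q < 4) (hα : 0 < α) (hμ : 0 < μ)
    (u u' : ℝ → ℝ) (hu : InH1g u u') (hm0 : 0 < massg u) (hm : massg u ≤ μ)
    (hmin : energyg q α u u' = sInf (levelSetg q α μ))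
    (hneg : sInf (levelSetg q α μ) < 0) :
    ∃ lam : ℝ,
      ContDiffOn ℝ 2 u (Ioo 0 1) ∧ ContDiffOn ℝ 2 u (Ioi 1) ∧
      (∀ x ∈ Ioo (0 : ℝ) 1 ∪ Ioi 1,
        HasDerivAt (fun y => g y * deriv u y) (lam * g x * u x) x) ∧
      ∃ m : ℝ, HasDerivWithinAt u m (Ici 0) 0 ∧
        4 * m = -α * |u 0| ^ (q - 2) * u 0 := by
  have hq0 : q ≠ 0 := by linarith
  have hEneg : energyg q α u u' < 0 := by rw [hmin]; exact hneg
  have hK0 : 0 ≤ ∫ x in Ioi (0:ℝ), u' x ^ 2 * g x :=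
    setIntegral_nonneg measurableSet_Ioi
      (fun x _ => mul_nonneg (sq_nonneg _) (g_pos x).le)
  have hu0 : u 0 ≠ 0 := by
    intro h
    unfold energyg at hEneg
    rw [h, abs_zero, Real.zero_rpow hq0] at hEneg
    simp at hEneg
    linarith
  set lamt := ((∫ x in Ioi (0:ℝ), u' x ^ 2 * g x) - α * |u 0| ^ q) / massg u with hlamt
  set βc := α * |u 0| ^ (q - 2) * u 0 with hβc
  set ut := fun x : ℝ => u (max x 0) with hut
  have hcont_ut : Continuous ut := by
    apply (u_cont u u' hu hu0).comp_continuous (continuous_id.max continuous_const)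
    intro x; exact le_max_right x 0
  set P := fun x : ℝ => ∫ t in (0:ℝ)..x, ut t * g t with hP_def
  set R := fun x : ℝ => ∫ t in (0:ℝ)..x, ut t * g t * Hf t with hR_def
  have hPd : ∀ x, HasDerivAt P (ut x * g x) x :=
    fun x => hasDerivAt_prim (hcont_ut.mul g_cont) x
  have hRd : ∀ x, HasDerivAt R (ut x * g x * Hf x) x :=
    fun x => hasDerivAt_prim ((hcont_ut.mul g_cont).mul Hf_cont) x
  have hstar : ∀ x : ℝ, 0 ≤ x →
      u x = u 0 - lamt * (Hf x * P x - R x) - βc * Hf x := by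
    intro x hx
    rcases eq_or_lt_of_le hx with h | h
    · rw [← h]
      simp [hP_def, hR_def, Hf_zero, intervalIntegral.integral_same]
    · have hvar := variational q α μ hq hα u u' hu hm0 hm hmin hneg hu0 x h
      have hAeq := A_eq u u' hu hu0 x h
      rw [hAeq] at hvar
      rw [hlamt, hβc]
      rw [hP_def, hR_def]
      linarith [hvar]
  set v := fun x : ℝ => -((lamt * P x + βc) * (g x)⁻¹) with hv_def
  have hΦd : ∀ x : ℝ,
      HasDerivAt (fun y => u 0 - lamt * (Hf y * P y - R y) - βc * Hf y) (v x) x := by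
    intro x
    have h1 := (((Hf_hasDeriv x).mul (hPd x)).sub (hRd x)).const_mul lamt
    have h2 := (Hf_hasDeriv x).const_mul βc
    have h3 := ((hasDerivAt_const x (u 0)).sub h1).sub h2
    refine h3.congr_deriv ?_
    rw [hv_def]
    field_simp
    ring
  have hud : ∀ x : ℝ, 0 < x → HasDerivAt u (v x) x := by
    intro x hx
    apply HasDerivAt.congr_of_eventuallyEq (hΦd x)
    filter_upwards [Ioi_mem_nhds hx] with y hy
    exact hstar y (le_of_lt hy)
  have hC2 : ∀ s : Set ℝ, IsOpen s → s ⊆ Ioi (0:ℝ) → ContDiffOn ℝ 1 g s →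
      ContDiffOn ℝ 2 u s := by
    intro s hs hsub hg1
    have hudiff : DifferentiableOn ℝ u s :=
      fun x hxs => ((hud x (hsub hxs)).differentiableAt).differentiableWithinAt
    have hP1 : ContDiffOn ℝ 1 P s := by
      rw [show (1 : WithTop ℕ∞) = 0 + 1 from by norm_num,
        contDiffOn_succ_iff_deriv_of_isOpen hs]
      refine ⟨fun x hxs => (hPd x).differentiableAt.differentiableWithinAt,
        by intro hω; simp at hω, ?_⟩
      rw [contDiffOn_zero]
      have : deriv P = fun x => ut x * g x := funext fun x => (hPd x).deriv
      rw [this]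
      exact (hcont_ut.mul g_cont).continuousOn
    have hv1 : ContDiffOn ℝ 1 v s := by
      rw [hv_def]
      apply ContDiffOn.neg
      apply ContDiffOn.mul
      · exact (contDiffOn_const.mul hP1).add contDiffOn_const
      · exact hg1.inv (fun x hxs => g_ne x)
    rw [show (2 : WithTop ℕ∞) = 1 + 1 from by norm_num,
      contDiffOn_succ_iff_deriv_of_isOpen hs]
    refine ⟨hudiff, by intro hω; simp at hω, ?_⟩
    apply hv1.congr
    intro x hxs
    exact (hud x (hsub hxs)).deriv
  refine ⟨-lamt, ?_, ?_, ?_, ⟨v 0, ?_, ?_⟩⟩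
  · apply hC2 _ isOpen_Ioo (fun x hx => hx.1)
    apply contDiffOn_const.congr
    intro x hx
    show g x = 4
    unfold g
    rw [if_pos hx.2.le]
  · apply hC2 _ isOpen_Ioi (fun x hx => mem_Ioi.mpr (lt_trans one_pos hx))
    apply ContDiffOn.congr (f := fun x : ℝ => 4*(2*x-1))
    · exact (by fun_prop : ContDiff ℝ 1 fun x : ℝ => 4*(2*x-1)).contDiffOn
    · intro x hx
      show g x = 4*(2*x-1)
      unfold g
      rw [if_neg (not_le.mpr hx)]
  · intro x hx
    have hx0 : 0 < x := by
      rcases hx with h | h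
      · exact h.1
      · exact lt_trans one_pos h
    have hW : HasDerivAt (fun y => -(lamt * P y + βc)) (-lamt * g x * u x) x := by
      have h1 := (((hPd x).const_mul lamt).add_const βc).neg
      refine h1.congr_deriv ?_
      rw [hut]
      show -(lamt * (u (max x 0) * g x)) = -lamt * g x * u x
      rw [max_eq_left hx0.le]
      ring
    apply HasDerivAt.congr_of_eventuallyEq hW
    filter_upwards [Ioi_mem_nhds hx0] with y hy
    show g y * deriv u y = -(lamt * P y + βc)
    rw [(hud y hy).deriv, hv_def]
    show g y * -((lamt * P y + βc) * (g y)⁻¹) = -(lamt * P y + βc)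
    field_simp
    exact congrArg Neg.neg (mul_div_cancel_left₀ _ (g_ne y))
  · exact ((hΦd 0).hasDerivWithinAt).congr (fun y hy => hstar y hy) (hstar 0 le_rfl)
  · rw [hv_def]
    show 4 * -((lamt * P 0 + βc) * (g 0)⁻¹) = -α * |u 0| ^ (q - 2) * u 0
    rw [hP_def]
    show 4 * -((lamt * (∫ t in (0:ℝ)..(0:ℝ), ut t * g t) + βc) * (g 0)⁻¹) = _
    rw [intervalIntegral.integral_same, g_zero, hβc]
    ring
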